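/- Let p be an integer and let B ⊆ ℝ² be a closed convex set that is symmetric about the origin (−B = B) and contains the points (1,0) and (2p+1,2). Then the two-dimensional Lebesgue measure of B is at least 4, and if it equals 4 then B is the convex hull of the four points (1,0), (−1,0), (2p+1,2), (−2p−1,−2). -/

import Mathlib

open Pointwise MeasureTheory
open scoped ENNReal

noncomputable def Mlin (q : ℝ) : (ℝ × ℝ) →ₗ[ℝ] (ℝ × ℝ) :=
  Matrix.toLin (Module.Basis.finTwoProd ℝ) (Module.Basis.finTwoProd ℝ) !![(1+q)/2, -q/2; 1/2, -1/2]

lemma Mlin_apply (q : ℝ) (x : ℝ × ℝ) :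
    Mlin q x = ((1+q)/2 * x.1 + -q/2 * x.2, 1/2 * x.1 + -1/2 * x.2) :=
  Matrix.toLin_finTwoProd_apply _ _ _ _ _

lemma Mlin_det (q : ℝ) : (Mlin q).det = -(1/4) := by
  rw [Mlin, LinearMap.det_toLin]
  rw [Matrix.det_fin_two_of]
  ring

lemma square_eq : (Set.Icc ((-2:ℝ),(-2:ℝ)) (2,2))
    = convexHull ℝ (({-2,2} : Set ℝ) ×ˢ ({-2,2} : Set ℝ)) := by
  rw [Set.Icc_prod_eq]
  show Set.Icc (-2:ℝ) 2 ×ˢ Set.Icc (-2:ℝ) 2 = _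
  rw [convexHull_prod, convexHull_pair, segment_eq_Icc (by norm_num : (-2:ℝ) ≤ 2)]

lemma P_eq (q : ℝ) :
    convexHull ℝ (({((1:ℝ),(0:ℝ)), (-1,0), (2*q+1,2), (-(2*q+1),-2)}) : Set (ℝ × ℝ))
      = Mlin q '' Set.Icc ((-2:ℝ),(-2:ℝ)) (2,2) := by
  rw [square_eq, LinearMap.image_convexHull]
  congr 1
  have : (({-2,2} : Set ℝ) ×ˢ ({-2,2} : Set ℝ))
      = ({((-2:ℝ),(-2:ℝ)), (-2,2), (2,-2), (2,2)} : Set (ℝ×ℝ)) := by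
    ext z
    simp [Set.mem_prod, Prod.ext_iff]
    tauto
  rw [this]
  simp only [Set.image_insert_eq, Set.image_singleton, Mlin_apply]
  norm_num
  ext z
  simp [Prod.ext_iff]
  constructor
  · rintro (h|h|h|h) <;> [skip; skip; skip; skip] <;>
      first
      | exact Or.inl ⟨by linarith [h.1], by linarith [h.2]⟩
      | exact Or.inr (Or.inl ⟨by linarith [h.1], by linarith [h.2]⟩)
      | exact Or.inr (Or.inr (Or.inl ⟨by linarith [h.1], by linarith [h.2]⟩))
      | exact Or.inr (Or.inr (Or.inr ⟨by linarith [h.1], by linarith [h.2]⟩))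
  · rintro (h|h|h|h) <;>
      first
      | exact Or.inl ⟨by linarith [h.1], by linarith [h.2]⟩
      | exact Or.inr (Or.inl ⟨by linarith [h.1], by linarith [h.2]⟩)
      | exact Or.inr (Or.inr (Or.inl ⟨by linarith [h.1], by linarith [h.2]⟩))
      | exact Or.inr (Or.inr (Or.inr ⟨by linarith [h.1], by linarith [h.2]⟩))

lemma vol_P (q : ℝ) :
    volume (convexHull ℝ
      (({((1:ℝ),(0:ℝ)), (-1,0), (2*q+1,2), (-(2*q+1),-2)}) : Set (ℝ × ℝ))) = 4 := by
  rw [P_eq, Measure.addHaar_image_linearMap, Mlin_det, Set.Icc_prod_eq,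
    MeasureTheory.Measure.volume_eq_prod, Measure.prod_prod]
  norm_num [Real.volume_Icc, ← ENNReal.ofReal_mul]
  rw [show (16:ℝ≥0∞) = ENNReal.ofReal 16 by simp,
    ← ENNReal.ofReal_mul (by norm_num)]
  norm_num

/-- Convex-geometric fact from the proof of Theorem 3.3 (9): if `B ⊆ ℝ²` is a closed
convex set, symmetric about the origin, containing `(1,0)` and `(2p+1,2)`, then its
Lebesgue measure is at least `4`, and if it equals `4` then `B` is the convex hull of
the four points `(1,0)`, `(−1,0)`, `(2p+1,2)`, `(−2p−1,−2)`. -/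
theorem stmt_18 (p : ℤ) (B : Set (ℝ × ℝ)) (hB : IsClosed B) (hconv : Convex ℝ B)
    (hsymm : -B = B) (h1 : ((1 : ℝ), (0 : ℝ)) ∈ B) (h2 : ((2 * (p : ℝ) + 1, 2)) ∈ B) :
    4 ≤ volume B ∧
    (volume B = 4 → B = convexHull ℝ
      ({((1 : ℝ), (0 : ℝ)), (-1, 0), (2 * (p : ℝ) + 1, 2), (-(2 * (p : ℝ) + 1), -2)} :
        Set (ℝ × ℝ))) := by
  set S : Set (ℝ × ℝ) :=
    {((1 : ℝ), (0 : ℝ)), (-1, 0), (2 * (p : ℝ) + 1, 2), (-(2 * (p : ℝ) + 1), -2)} with hS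
  set P : Set (ℝ × ℝ) := convexHull ℝ S with hP
  have h1' : ((-1 : ℝ), (0 : ℝ)) ∈ B := by
    rw [← hsymm]
    show -((-1 : ℝ), (0 : ℝ)) ∈ B
    simpa using h1
  have h2' : ((-(2 * (p : ℝ) + 1), (-2 : ℝ))) ∈ B := by
    rw [← hsymm]
    show -((-(2 * (p : ℝ) + 1), (-2 : ℝ))) ∈ B
    simpa using h2
  have hSB : S ⊆ B := by
    intro z hz
    rcases hz with rfl | rfl | rfl | rfl
    · exact h1
    · exact h1'
    · exact h2
    · exact h2'
  have hPB : P ⊆ B := convexHull_min hSB hconv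
  have hvolP : volume P = 4 := vol_P (p : ℝ)
  have hge : 4 ≤ volume B := by
    calc (4 : ℝ≥0∞) = volume P := hvolP.symm
    _ ≤ volume B := measure_mono hPB
  refine ⟨hge, fun hvol => ?_⟩
  apply Set.Subset.antisymm _ hPB
  by_contra hnot
  obtain ⟨x, hxB, hxP⟩ := Set.not_subset.1 hnot
  have hPconv : Convex ℝ P := convex_convexHull ℝ S
  have hSfin : S.Finite := by
    apply Set.Finite.insert; apply Set.Finite.insert; apply Set.Finite.insert
    exact Set.finite_singleton _
  have hPcl : IsClosed P := (hSfin.isCompact_convexHull (𝕜 := ℝ)).isClosed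
  have hint : (interior P).Nonempty := by
    by_contra hi
    rw [Set.not_nonempty_iff_eq_empty] at hi
    have haff : affineSpan ℝ P ≠ ⊤ := by
      intro ht
      rcases (hPconv.interior_nonempty_iff_affineSpan_eq_top).2 ht with ⟨c, hc⟩
      simp [hi] at hc
    have h0 : volume P = 0 :=
      measure_mono_null (subset_affineSpan ℝ P) (Measure.addHaar_affineSubspace volume _ haff)
    simp [hvolP] at h0
  obtain ⟨c, hc⟩ := hint
  have hcB : c ∈ interior B := interior_mono hPB hc
  have hcx : c ≠ x := fun h => hxP (h ▸ interior_subset hc)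
  obtain ⟨δ, hδ, hball⟩ := Metric.isOpen_iff.1 hPcl.isOpen_compl x hxP
  set d := dist c x with hd
  have hdpos : 0 < d := dist_pos.2 hcx
  set t : ℝ := min (1/2) (δ / (2 * d)) with ht
  have htpos : 0 < t := lt_min (by norm_num) (by positivity)
  have ht1 : t ≤ 1/2 := min_le_left _ _
  set y := t • c + (1 - t) • x with hy
  have hyB : y ∈ interior B :=
    hconv.combo_interior_self_mem_interior hcB hxB htpos (by linarith) (by ring)
  have hyx : dist y x < δ := by
    have hsub : y - x = t • (c - x) := by rw [hy]; module
    have : dist y x = t * d := by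
      rw [dist_eq_norm, hsub, norm_smul, Real.norm_eq_abs, abs_of_pos htpos, hd, dist_eq_norm]
    rw [this]
    have h2 : t * d ≤ δ / (2 * d) * d :=
      mul_le_mul_of_nonneg_right (min_le_right _ _) hdpos.le
    have h3 : δ / (2 * d) * d = δ / 2 := by field_simp
    calc t * d ≤ δ / 2 := by rw [← h3]; exact h2
    _ < δ := by linarith
  have hyP : y ∉ P := fun h => hball (Metric.mem_ball.2 hyx) h
  obtain ⟨r1, hr1, hb1⟩ := Metric.isOpen_iff.1 isOpen_interior y hyB
  obtain ⟨r2, hr2, hb2⟩ := Metric.isOpen_iff.1 hPcl.isOpen_compl y hyP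
  set r := min r1 r2 with hr
  have hrpos : 0 < r := lt_min hr1 hr2
  have hdisj : Disjoint P (Metric.ball y r) := Set.disjoint_left.2 fun z hzP hzb =>
    hb2 (Metric.ball_subset_ball (min_le_right _ _) hzb) hzP
  have hsubB : P ∪ Metric.ball y r ⊆ B :=
    Set.union_subset hPB ((Metric.ball_subset_ball (min_le_left _ _)).trans
      (hb1.trans interior_subset))
  have hsum : volume (P ∪ Metric.ball y r) = volume P + volume (Metric.ball y r) :=
    measure_union hdisj measurableSet_ball
  have hlt : (4:ℝ≥0∞) < volume P + volume (Metric.ball y r) := by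
    rw [hvolP]
    exact ENNReal.lt_add_right (by norm_num) (Metric.measure_ball_pos volume y hrpos).ne'
  have hle : volume P + volume (Metric.ball y r) ≤ 4 := by
    rw [← hsum, ← hvol]; exact measure_mono hsubB
  exact absurd (hlt.trans_le hle) (lt_irrefl _)
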